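/- Let n, k, d be positive integers with d·(k+1) < n, and let 0 ≤ α ≤ 1 be real. If there exists an (n,k,α)-bisector F, then there exists an (n+d,k,α)-bisector of size at most (k+1)·|F|. -/

import Mathlib

open Finset

/-- An `(n,k,α)`-bisector: every function maps exactly `⌈α·n⌉` elements to `1`,
and every `k`-subset of `[n]` is mapped entirely to `0` by some function. -/
def IsBisector (n k : ℕ) (α : ℝ) (F : Finset (Fin n → Fin 2)) : Prop :=
  (∀ f ∈ F, (Finset.univ.filter fun x => f x = 1).card = ⌈α * (n : ℝ)⌉₊) ∧
  ∀ S : Finset (Fin n), S.card = k → ∃ f ∈ F, ∀ x ∈ S, f x = 0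


/-- swap block `[j*d, j*d+d)` with `[n, n+d)` -/
def sv (n d j x : ℕ) : ℕ :=
  if j*d ≤ x ∧ x < j*d + d then n + (x - j*d)
  else if n ≤ x then j*d + (x - n) else x

lemma sv_lt (n d j : ℕ) (hj : (j+1)*d ≤ n) (x : ℕ) (hx : x < n + d) :
    sv n d j x < n + d := by
  have hj' : j*d + d ≤ n := by nlinarith
  unfold sv; split_ifs <;> omega

lemma sv_invol (n d j : ℕ) (hj : (j+1)*d ≤ n) (x : ℕ) (hx : x < n + d) :
    sv n d j (sv n d j x) = x := by
  have hj' : j*d + d ≤ n := by nlinarith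
  unfold sv; split_ifs <;> omega

def sigmaPerm (n d j : ℕ) (hj : (j+1)*d ≤ n) : Equiv.Perm (Fin (n+d)) :=
  Function.Involutive.toPerm (fun x => ⟨sv n d j x.1, sv_lt n d j hj x.1 x.2⟩)
    (fun x => Fin.ext (sv_invol n d j hj x.1 x.2))

def extFun (n d m : ℕ) (f : Fin n → Fin 2) : Fin (n+d) → Fin 2 :=
  fun x => if h : (x:ℕ) < n then f ⟨x, h⟩ else if (x:ℕ) < n + m then 1 else 0

lemma card_filter_comp_perm {α : Type*} [Fintype α] [DecidableEq α]
    (e : Equiv.Perm α) (p : α → Prop) [DecidablePred p] :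
    (univ.filter fun x => p (e x)).card = (univ.filter p).card := by
  apply Finset.card_bij (fun x _ => e x)
  · intro a ha; simp only [mem_filter, mem_univ, true_and] at ha ⊢; exact ha
  · intro a _ b _ h; exact e.injective h
  · intro b hb
    refine ⟨e.symm b, ?_, by simp⟩
    simp only [mem_filter, mem_univ, true_and, Equiv.apply_symm_apply] at hb ⊢
    exact hb

lemma extFun_card (n d m : ℕ) (hm : m ≤ d) (f : Fin n → Fin 2) :
    (univ.filter fun x => extFun n d m f x = 1).card
      = (univ.filter fun y => f y = 1).card + m := by
  have key : (univ.filter fun x => extFun n d m f x = 1)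
      = ((univ.filter fun y : Fin n => f y = 1).map
          (Fin.castLEEmb (Nat.le_add_right n d)))
        ∪ ((Finset.Ico n (n+m)).attachFin (fun a ha => by
            simp only [Finset.mem_Ico] at ha; omega)) := by
    ext x
    simp only [mem_union, mem_map, mem_filter, mem_univ, true_and,
      Finset.mem_attachFin, Finset.mem_Ico, extFun, Fin.castLEEmb,
      Function.Embedding.coeFn_mk, Fin.castLE]
    by_cases h : (x:ℕ) < n
    · show x ∈ Finset.filter (fun x => extFun n d m f x = 1) univ ↔ _
      rw [mem_filter]; simp only [mem_univ, true_and, extFun, dif_pos h]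
      constructor
      · intro h1; exact Or.inl ⟨⟨x, h⟩, h1, rfl⟩
      · rintro (⟨y, hy, rfl⟩ | hx2)
        · exact hy
        · omega
    · show x ∈ Finset.filter (fun x => extFun n d m f x = 1) univ ↔ _
      rw [mem_filter]; simp only [mem_univ, true_and, extFun, dif_neg h]
      constructor
      · intro h1
        right
        split at h1
        · omega
        · exact absurd h1 (by decide)
      · rintro (⟨y, hy, rfl⟩ | hx2)
        · exact absurd y.2 (by simpa using h)
        · rw [if_pos hx2.2]
  rw [key, Finset.card_union_of_disjoint, Finset.card_map, Finset.card_attachFin,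
    Nat.card_Ico]
  · omega
  · rw [Finset.disjoint_left]
    rintro x hx hx2
    simp only [mem_map, mem_filter, mem_univ, true_and, Fin.castLEEmb,
      Function.Embedding.coeFn_mk] at hx
    simp only [Finset.mem_attachFin, Finset.mem_Ico] at hx2
    obtain ⟨y, _, rfl⟩ := hx
    exact absurd y.2 (by simp [Fin.castLE] at hx2 ⊢; omega)

/-- If `d·(k+1) < n` and there is an `(n,k,α)`-bisector `F`, then there is an
`(n+d,k,α)`-bisector of size at most `(k+1)·|F|`. -/
theorem bisector_extend_by_d (n k d : ℕ) (hn : 0 < n) (hk : 0 < k) (hd : 0 < d)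
    (hdk : d * (k + 1) < n) (α : ℝ) (hα0 : 0 ≤ α) (hα1 : α ≤ 1)
    (F : Finset (Fin n → Fin 2)) (hF : IsBisector n k α F) :
    ∃ F' : Finset (Fin (n + d) → Fin 2),
      IsBisector (n + d) k α F' ∧ F'.card ≤ (k + 1) * F.card := by
  -- the number of extra ones
  set m : ℕ := ⌈α * ((n + d : ℕ) : ℝ)⌉₊ - ⌈α * (n : ℝ)⌉₊ with hm_def
  have hmono : ⌈α * (n : ℝ)⌉₊ ≤ ⌈α * ((n + d : ℕ) : ℝ)⌉₊ := by
    apply Nat.ceil_le_ceil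
    apply mul_le_mul_of_nonneg_left _ hα0
    push_cast; linarith
  have hle : ⌈α * ((n + d : ℕ) : ℝ)⌉₊ ≤ ⌈α * (n : ℝ)⌉₊ + d := by
    have h1 : α * ((n + d : ℕ) : ℝ) ≤ α * (n : ℝ) + (d : ℝ) := by
      push_cast
      nlinarith
    calc ⌈α * ((n + d : ℕ) : ℝ)⌉₊ ≤ ⌈α * (n : ℝ) + (d : ℝ)⌉₊ := Nat.ceil_le_ceil h1
      _ = ⌈α * (n : ℝ)⌉₊ + d := by
          rw [Nat.ceil_add_natCast (by positivity)]
  have hm : m ≤ d := by omega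
  have hsum : ⌈α * (n : ℝ)⌉₊ + m = ⌈α * ((n + d : ℕ) : ℝ)⌉₊ := by omega
  have hjle : ∀ j : Fin (k+1), ((j : ℕ)+1)*d ≤ n := by
    intro j
    have := j.2
    calc ((j:ℕ)+1)*d ≤ (k+1)*d := by
          apply Nat.mul_le_mul_right; omega
      _ = d*(k+1) := by ring
      _ ≤ n := le_of_lt hdk
  refine ⟨(F ×ˢ (univ : Finset (Fin (k+1)))).image
      (fun p => extFun n d m p.1 ∘ (sigmaPerm n d p.2 (hjle p.2))), ⟨?_, ?_⟩, ?_⟩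
  · -- count of ones
    intro g hg
    simp only [mem_image, mem_product, mem_univ, and_true] at hg
    obtain ⟨⟨f, j⟩, hf, rfl⟩ := hg
    have h1 : (univ.filter fun x =>
        extFun n d m f ((sigmaPerm n d j (hjle j)) x) = 1).card
        = (univ.filter fun x => extFun n d m f x = 1).card :=
      card_filter_comp_perm (sigmaPerm n d j (hjle j)) (fun y => extFun n d m f y = 1)
    simp only [Function.comp_apply]
    rw [h1, extFun_card n d m hm f, hF.1 f hf, hsum]
  · -- coverage
    intro S hS
    have hTcard : (S.image (fun x : Fin (n+d) => (x : ℕ) / d)).card ≤ k :=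
      le_trans (card_image_le) (le_of_eq hS)
    have : ∃ j ∈ Finset.range (k+1), j ∉ S.image (fun x : Fin (n+d) => (x : ℕ) / d) := by
      by_contra h
      push_neg at h
      have hsub : Finset.range (k+1) ⊆ S.image (fun x : Fin (n+d) => (x : ℕ) / d) := h
      have := Finset.card_le_card hsub
      rw [Finset.card_range] at this
      omega
    obtain ⟨j, hjr, hjT⟩ := this
    rw [Finset.mem_range] at hjr
    set jf : Fin (k+1) := ⟨j, hjr⟩ with hjf
    have hjd : (j+1)*d ≤ n := hjle jf
    have hjd' : j*d + d ≤ n := by nlinarith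
    -- no element of S is inside block j
    have hblock : ∀ x ∈ S, ¬ (j*d ≤ (x:ℕ) ∧ (x:ℕ) < j*d + d) := by
      rintro x hx ⟨h1, h2⟩
      apply hjT
      rw [Finset.mem_image]
      refine ⟨x, hx, ?_⟩
      apply Nat.div_eq_of_lt_le h1
      rw [add_mul, one_mul]; omega
    have hsvlt : ∀ x ∈ S, sv n d j (x:ℕ) < n := by
      intro x hx
      have hb := hblock x hx
      have hx2 := x.2
      unfold sv
      split_ifs <;> omega
    set T0 : Finset (Fin n) :=
      S.attach.image (fun x => (⟨sv n d j (x.1:ℕ), hsvlt x.1 x.2⟩ : Fin n)) with hT0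
    have hT0card : T0.card ≤ k := by
      calc T0.card ≤ S.attach.card := card_image_le
        _ = k := by rw [Finset.card_attach, hS]
    have hkn : k ≤ n := by nlinarith
    obtain ⟨T, hT0T, _, hTcard'⟩ :=
      Finset.exists_subsuperset_card_eq (Finset.subset_univ T0) hT0card
        (by simpa using hkn)
    obtain ⟨f, hfF, hfz⟩ := hF.2 T hTcard'
    refine ⟨extFun n d m f ∘ (sigmaPerm n d jf (hjle jf)), ?_, ?_⟩
    · rw [Finset.mem_image]
      exact ⟨(f, jf), by simp [hfF], rfl⟩
    · intro x hx
      have hlt : sv n d j (x:ℕ) < n := hsvlt x hx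
      have hmem : (⟨sv n d j (x:ℕ), hlt⟩ : Fin n) ∈ T := by
        apply hT0T
        rw [hT0, Finset.mem_image]
        exact ⟨⟨x, hx⟩, Finset.mem_attach _ _, rfl⟩
      have : (sigmaPerm n d jf (hjle jf)) x
          = ⟨sv n d j (x:ℕ), sv_lt n d j (hjle jf) (x:ℕ) x.2⟩ := rfl
      simp only [Function.comp_apply, this, extFun, hlt, dif_pos]
      exact hfz _ hmem
  · calc ((F ×ˢ (univ : Finset (Fin (k+1)))).image _).card
        ≤ (F ×ˢ (univ : Finset (Fin (k+1)))).card := card_image_le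
      _ = F.card * (k+1) := by simp [Finset.card_product]
      _ = (k+1) * F.card := Nat.mul_comm _ _
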